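/- Fix 1 < p < ∞, 1 ≤ r < ∞, and let Young functions Φ₁, Φ₂ satisfy the modular inequality ∫₀^∞ Φ₁(H^{p,r}f*(t)) dt ≤ ∫₀^∞ Φ₂(K f*(s)) ds for all nonincreasing f* ≥ 0. Then t^p ∫₀ᵗ Φ₁(s)/s^{p+1} ds ≤ (1/p) Φ₂(K (r/p)^{1/r} t) for all t > 0. -/

import Mathlib

open MeasureTheory Set

/-- The Calderón-type operator
`H^{p,r} g (t) = (t^{-r/p} ∫₀ᵗ g(s)^r s^{r/p-1} ds)^{1/r}`. -/
noncomputable def Hpr (p r : ℝ) (g : ℝ → ℝ) (t : ℝ) : ℝ :=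
  (t ^ (-(r / p)) * ∫ s in (0:ℝ)..t, g s ^ r * s ^ (r / p - 1)) ^ (1 / r)

/-- If Young functions `Φ₁, Φ₂` satisfy the modular inequality
`∫₀^∞ Φ₁(H^{p,r}f*(t)) dt ≤ ∫₀^∞ Φ₂(K f*(s)) ds` for all nonnegative nonincreasing
`f*`, then `t^p ∫₀ᵗ Φ₁(s)/s^{p+1} ds ≤ (1/p) Φ₂(K (r/p)^{1/r} t)` for all `t > 0`. -/
theorem Hpr_modular_implies_ZygmundStromberg (p r : ℝ) (hp : 1 < p) (hr : 1 ≤ r)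
    (φ₁ φ₂ Φ₁ Φ₂ : ℝ → ℝ)
    (hφ₁mono : MonotoneOn φ₁ (Set.Ici 0)) (hφ₁0 : ∀ s, 0 ≤ s → 0 ≤ φ₁ s)
    (hφ₂mono : MonotoneOn φ₂ (Set.Ici 0)) (hφ₂0 : ∀ s, 0 ≤ s → 0 ≤ φ₂ s)
    (hΦ₁ : ∀ t, Φ₁ t = ∫ s in (0:ℝ)..t, φ₁ s)
    (hΦ₂ : ∀ t, Φ₂ t = ∫ s in (0:ℝ)..t, φ₂ s)
    {K : ℝ} (hK : 0 < K)
    (hmod : ∀ f : ℝ → ℝ, (∀ s, 0 ≤ f s) → AntitoneOn f (Set.Ioi 0) →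
      (∫ t in Set.Ioi (0:ℝ), Φ₁ (Hpr p r f t)) ≤ ∫ s in Set.Ioi (0:ℝ), Φ₂ (K * f s)) :
    ∀ t : ℝ, 0 < t →
      t ^ p * (∫ s in (0:ℝ)..t, Φ₁ s / s ^ (p + 1))
        ≤ (1 / p) * Φ₂ (K * (r / p) ^ (1 / r) * t) := by
  intro t ht
  have hp0 : (0:ℝ) < p := lt_trans one_pos hp
  have hr0 : (0:ℝ) < r := lt_of_lt_of_le one_pos hr
  have hrp : (0:ℝ) < r / p := div_pos hr0 hp0
  have hΦ₂nonneg : 0 ≤ Φ₂ (K * (r / p) ^ (1 / r) * t) := by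
    rw [hΦ₂]
    apply intervalIntegral.integral_nonneg (by positivity)
    exact fun u hu => hφ₂0 u hu.1
  by_cases hint : IntervalIntegrable (fun s => Φ₁ s / s ^ (p + 1)) volume 0 t
  swap
  · rw [intervalIntegral.integral_undef hint, mul_zero]
    positivity
  -- set up the test function
  set a : ℝ := t * (r / p) ^ (1 / r) with ha_def
  have ha : 0 < a := by positivity
  set f : ℝ → ℝ := (Set.Ioc (0:ℝ) 1).indicator (fun _ => a) with hf_def
  have hf_on : ∀ s ∈ Ioc (0:ℝ) 1, f s = a := fun s hs => indicator_of_mem hs _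
  have hf_off : ∀ s : ℝ, 1 < s → f s = 0 := fun s hs =>
    indicator_of_notMem (fun h => absurd h.2 (not_le.mpr hs)) _
  have hf_nonneg : ∀ s, 0 ≤ f s := fun s => Set.indicator_nonneg (fun _ _ => ha.le) s
  have hf_anti : AntitoneOn f (Set.Ioi 0) := by
    intro x hx y hy hxy
    by_cases hy1 : y ≤ 1
    · rw [hf_on x ⟨mem_Ioi.mp hx, hxy.trans hy1⟩, hf_on y ⟨mem_Ioi.mp hy, hy1⟩]
    · rw [hf_off y (not_le.mp hy1)]; exact hf_nonneg x
  -- value of the inner integral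
  have hFint1 : ∀ u : ℝ, 0 < u → u ≤ 1 →
      (∫ s in (0:ℝ)..u, f s ^ r * s ^ (r / p - 1)) = a ^ r * (u ^ (r / p) / (r / p)) := by
    intro u hu hu1
    rw [intervalIntegral.integral_of_le hu.le,
      setIntegral_congr_fun measurableSet_Ioc
        (g := fun s : ℝ => a ^ r * s ^ (r / p - 1))
        (fun s hs => by rw [hf_on s ⟨hs.1, hs.2.trans hu1⟩]),
      ← intervalIntegral.integral_of_le hu.le, intervalIntegral.integral_const_mul,
      integral_rpow (Or.inl (by linarith : (-1:ℝ) < r / p - 1))]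
    rw [show r / p - 1 + 1 = r / p by ring, Real.zero_rpow hrp.ne', sub_zero]
  have hFint1' : IntervalIntegrable (fun s => f s ^ r * s ^ (r / p - 1)) volume 0 1 := by
    rw [intervalIntegrable_iff_integrableOn_Ioc_of_le zero_le_one]
    refine (IntegrableOn.congr_fun ?_ (fun s hs => by rw [hf_on s hs]) measurableSet_Ioc)
    rw [← intervalIntegrable_iff_integrableOn_Ioc_of_le zero_le_one]
    exact (intervalIntegral.intervalIntegrable_rpow' (by linarith)).const_mul _
  have hFzero : ∀ s : ℝ, 1 < s → f s ^ r * s ^ (r / p - 1) = 0 := by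
    intro s hs
    rw [hf_off s hs, Real.zero_rpow hr0.ne', zero_mul]
  have hFint2 : ∀ u : ℝ, 1 < u →
      (∫ s in (0:ℝ)..u, f s ^ r * s ^ (r / p - 1)) = a ^ r / (r / p) := by
    intro u hu
    have h2 : IntervalIntegrable (fun s => f s ^ r * s ^ (r / p - 1)) volume 1 u := by
      rw [intervalIntegrable_iff_integrableOn_Ioc_of_le hu.le]
      exact (integrableOn_zero).congr_fun (fun s hs => (hFzero s hs.1).symm) measurableSet_Ioc
    rw [← intervalIntegral.integral_add_adjacent_intervals hFint1' h2,
      hFint1 1 one_pos le_rfl, Real.one_rpow,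
      intervalIntegral.integral_of_le hu.le,
      setIntegral_congr_fun measurableSet_Ioc (g := fun _ : ℝ => (0:ℝ))
        (fun s hs => hFzero s hs.1),
      integral_zero, add_zero]
    ring
  -- the values of Hpr on the test function
  have hrinv : r * (1 / r) = 1 := mul_one_div_cancel hr0.ne'
  have hval : (a ^ r / (r / p)) ^ (1 / r) = t := by
    rw [ha_def, Real.mul_rpow ht.le (Real.rpow_nonneg hrp.le _),
      ← Real.rpow_mul hrp.le, one_div_mul_cancel hr0.ne', Real.rpow_one,
      mul_div_assoc, div_self hrp.ne', mul_one,
      ← Real.rpow_mul ht.le, hrinv, Real.rpow_one]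
  have hHpr1 : ∀ u ∈ Ioc (0:ℝ) 1, Hpr p r f u = t := by
    intro u hu
    rw [Hpr, hFint1 u hu.1 hu.2,
      show u ^ (-(r / p)) * (a ^ r * (u ^ (r / p) / (r / p)))
        = (u ^ (-(r / p)) * u ^ (r / p)) * (a ^ r / (r / p)) by ring,
      ← Real.rpow_add hu.1, neg_add_cancel, Real.rpow_zero, one_mul, hval]
  have hHpr2 : ∀ u ∈ Ioi (1:ℝ), Hpr p r f u = t * u ^ (-(1 / p)) := by
    intro u hu
    have hu0 : (0:ℝ) < u := lt_trans one_pos hu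
    rw [Hpr, hFint2 u hu,
      Real.mul_rpow (Real.rpow_nonneg hu0.le _) (by positivity),
      hval, ← Real.rpow_mul hu0.le,
      show -(r / p) * (1 / r) = -(1 / p) by field_simp, mul_comm]
  set c : ℝ := -(1 / p) with hc_def
  have hcneg : c < 0 := neg_lt_zero.mpr (by positivity)
  -- change of variables u ↦ t * u ^ c from Ioi 1 to Ioo 0 t
  have hderiv : ∀ u ∈ Ioi (1:ℝ), HasDerivWithinAt (fun u : ℝ => t * u ^ c)
      (t * (c * u ^ (c - 1))) (Ioi 1) u := fun u hu =>
    ((Real.hasDerivAt_rpow_const (Or.inl (ne_of_gt (lt_trans one_pos hu)))).const_mul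
      t).hasDerivWithinAt
  have hinj : InjOn (fun u : ℝ => t * u ^ c) (Ioi 1) := by
    intro u hu v hv h
    have h' : u ^ c = v ^ c := mul_left_cancel₀ ht.ne' h
    exact Real.rpow_left_injOn (ne_of_lt hcneg) (show (0:ℝ) ≤ u from le_of_lt (lt_trans one_pos hu))
      (show (0:ℝ) ≤ v from le_of_lt (lt_trans one_pos hv)) h'
  have himg : (fun u : ℝ => t * u ^ c) '' (Ioi 1) = Ioo 0 t := by
    ext x
    simp only [mem_image, mem_Ioi, mem_Ioo]
    constructor
    · rintro ⟨u, hu, rfl⟩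
      have hu0 : (0:ℝ) < u := lt_trans one_pos hu
      have h1 : u ^ c < 1 := Real.rpow_lt_one_of_one_lt_of_neg hu hcneg
      have h2 : (0:ℝ) < u ^ c := Real.rpow_pos_of_pos hu0 c
      constructor
      · positivity
      · nlinarith
    · rintro ⟨hx0, hxt⟩
      have htx : (0:ℝ) < t / x := div_pos ht hx0
      refine ⟨(t / x) ^ p, ?_, ?_⟩
      · exact (Real.one_lt_rpow_iff_of_pos htx).mpr (Or.inl ⟨(one_lt_div hx0).mpr hxt, hp0⟩)
      · rw [← Real.rpow_mul htx.le, show p * c = -1 by rw [hc_def]; field_simp,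
          Real.rpow_neg_one, inv_div]
        field_simp
  have hkey := integral_image_eq_integral_abs_deriv_smul measurableSet_Ioi hderiv hinj
      (fun x => Φ₁ x / x ^ (p + 1))
  have hkeyInt := integrableOn_image_iff_integrableOn_abs_deriv_smul measurableSet_Ioi hderiv
      hinj (fun x => Φ₁ x / x ^ (p + 1))
  rw [himg] at hkey hkeyInt
  have htp : (0:ℝ) < t ^ p := Real.rpow_pos_of_pos ht p
  have hpoint : ∀ u ∈ Ioi (1:ℝ),
      |t * (c * u ^ (c - 1))| • (Φ₁ (t * u ^ c) / (t * u ^ c) ^ (p + 1))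
        = (1 / (p * t ^ p)) * Φ₁ (t * u ^ c) := by
    intro u hu
    have hu0 : (0:ℝ) < u := lt_trans one_pos hu
    have huc : (0:ℝ) < u ^ c := Real.rpow_pos_of_pos hu0 c
    have huc1 : (0:ℝ) < u ^ (c - 1) := Real.rpow_pos_of_pos hu0 _
    have habs : |t * (c * u ^ (c - 1))| = t * ((1 / p) * u ^ (c - 1)) := by
      rw [abs_of_neg (mul_neg_of_pos_of_neg ht (mul_neg_of_neg_of_pos hcneg huc1)), hc_def]
      ring
    rw [smul_eq_mul, habs, Real.mul_rpow ht.le huc.le, ← Real.rpow_mul hu0.le,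
      show c * (p + 1) = c - 1 by rw [hc_def]; field_simp; ring,
      show t ^ (p + 1) = t ^ p * t by rw [Real.rpow_add ht, Real.rpow_one]]
    field_simp
  have hIoo : IntegrableOn (fun x => Φ₁ x / x ^ (p + 1)) (Ioo 0 t) := by
    rw [intervalIntegrable_iff_integrableOn_Ioc_of_le ht.le] at hint
    exact hint.mono_set Ioo_subset_Ioc_self
  have hJint : IntegrableOn (fun u => Φ₁ (t * u ^ c)) (Ioi 1) := by
    have h2 := hkeyInt.mp hIoo
    have h3 : IntegrableOn (fun u => (1 / (p * t ^ p)) * Φ₁ (t * u ^ c)) (Ioi 1) :=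
      h2.congr_fun (fun u hu => hpoint u hu) measurableSet_Ioi
    have h4 : IntegrableOn (fun u => (p * t ^ p) * ((1 / (p * t ^ p)) * Φ₁ (t * u ^ c)))
        (Ioi 1) := h3.const_mul (p * t ^ p)
    refine h4.congr_fun (fun u hu => ?_) measurableSet_Ioi
    field_simp
  have hIooval : ∫ x in Ioo (0:ℝ) t, Φ₁ x / x ^ (p + 1)
      = (1 / (p * t ^ p)) * ∫ u in Ioi (1:ℝ), Φ₁ (t * u ^ c) := by
    rw [hkey, setIntegral_congr_fun measurableSet_Ioi (fun u hu => hpoint u hu),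
      integral_const_mul]
  -- decompose the modular inequality for the test function
  have hIocInt : IntegrableOn (fun u => Φ₁ (Hpr p r f u)) (Ioc 0 1) := by
    refine (integrableOn_const (C := Φ₁ t) (s := Ioc (0:ℝ) 1) (μ := volume)
      measure_Ioc_lt_top.ne).congr_fun
      (fun u hu => ?_) measurableSet_Ioc
    rw [hHpr1 u hu]
  have hIoiInt : IntegrableOn (fun u => Φ₁ (Hpr p r f u)) (Ioi 1) :=
    hJint.congr_fun (fun u hu => by rw [hHpr2 u hu]) measurableSet_Ioi
  have hconst : ∫ u in Ioc (0:ℝ) 1, Φ₁ (Hpr p r f u) = Φ₁ t := by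
    rw [setIntegral_congr_fun measurableSet_Ioc (g := fun _ => Φ₁ t)
      (fun u hu => by rw [hHpr1 u hu])]
    simp [Real.volume_Ioc]
  have hIoi2 : ∫ u in Ioi (1:ℝ), Φ₁ (Hpr p r f u) = ∫ u in Ioi (1:ℝ), Φ₁ (t * u ^ c) :=
    setIntegral_congr_fun measurableSet_Ioi (fun u hu => by rw [hHpr2 u hu])
  have hdecomp : ∫ u in Ioi (0:ℝ), Φ₁ (Hpr p r f u)
      = Φ₁ t + ∫ u in Ioi (1:ℝ), Φ₁ (t * u ^ c) := by
    rw [← Ioc_union_Ioi_eq_Ioi (zero_le_one (α := ℝ)),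
      setIntegral_union (Ioc_disjoint_Ioi le_rfl) measurableSet_Ioi hIocInt hIoiInt,
      hconst, hIoi2]
  have hΦ₂0 : Φ₂ 0 = 0 := by rw [hΦ₂]; exact intervalIntegral.integral_same
  have hRIocInt : IntegrableOn (fun s => Φ₂ (K * f s)) (Ioc 0 1) := by
    refine (integrableOn_const (C := Φ₂ (K * a)) (s := Ioc (0:ℝ) 1) (μ := volume)
      measure_Ioc_lt_top.ne).congr_fun
      (fun s hs => ?_) measurableSet_Ioc
    rw [hf_on s hs]
  have hRIoiInt : IntegrableOn (fun s => Φ₂ (K * f s)) (Ioi 1) := by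
    refine integrableOn_zero.congr_fun (fun s hs => ?_) measurableSet_Ioi
    rw [hf_off s hs, mul_zero, hΦ₂0]
  have hR : ∫ s in Ioi (0:ℝ), Φ₂ (K * f s) = Φ₂ (K * a) := by
    rw [← Ioc_union_Ioi_eq_Ioi (zero_le_one (α := ℝ)),
      setIntegral_union (Ioc_disjoint_Ioi le_rfl) measurableSet_Ioi hRIocInt hRIoiInt,
      setIntegral_congr_fun measurableSet_Ioc (g := fun _ => Φ₂ (K * a))
        (fun s hs => by rw [hf_on s hs]),
      setIntegral_congr_fun measurableSet_Ioi (g := fun _ => (0:ℝ))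
        (fun s hs => by rw [hf_off s hs, mul_zero, hΦ₂0]),
      integral_zero, add_zero]
    simp [Real.volume_Ioc]
  have hmain := hmod f hf_nonneg hf_anti
  rw [hdecomp, hR] at hmain
  have hΦ₁t : 0 ≤ Φ₁ t := by
    rw [hΦ₁]
    exact intervalIntegral.integral_nonneg ht.le (fun u hu => hφ₁0 u hu.1)
  have hJ : ∫ u in Ioi (1:ℝ), Φ₁ (t * u ^ c) ≤ Φ₂ (K * a) := by linarith
  have hfinal : (∫ s in (0:ℝ)..t, Φ₁ s / s ^ (p + 1))
      = (1 / (p * t ^ p)) * ∫ u in Ioi (1:ℝ), Φ₁ (t * u ^ c) := by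
    rw [intervalIntegral.integral_of_le ht.le, integral_Ioc_eq_integral_Ioo, hIooval]
  have harg : K * (r / p) ^ (1 / r) * t = K * a := by rw [ha_def]; ring
  rw [hfinal, harg,
    show t ^ p * ((1 / (p * t ^ p)) * ∫ u in Ioi (1:ℝ), Φ₁ (t * u ^ c))
      = (1 / p) * ∫ u in Ioi (1:ℝ), Φ₁ (t * u ^ c) by field_simp]
  exact mul_le_mul_of_nonneg_left hJ (by positivity)
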